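/- Let λ > 0, set Ĵ_n = J_{n+(2+λ)/λ}(2/λ) for n ∈ ℕ, and assume D = (2λ²+8λ+5)·Ĵ_1 − (λ+3)·Ĵ_2 is nonzero; set c = 2/D. Define π_0 = 1 − c·Ĵ_0 and π_n = c·(Ĵ_{n−1} − Ĵ_n) for n ≥ 1. Then: (i) for every n ∈ ℕ, ∑_{k=0}^n π_k = 1 − c·Ĵ_n; (ii) π is summable with ∑_{k=0}^∞ π_k = 1; and (iii) for every column j ∈ ℕ, the series ∑_{i=0}^∞ π_i·Q(i,j) converges absolutely to 0, i.e. π is a stationary vector of the front process on the ladder. -/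

import Mathlib

/-- Bessel function of the first kind of real order `ν`, for real `z > 0`,
defined by the series `∑ (−1)^m / (m! Γ(m+ν+1)) (z/2)^(2m+ν)` (real powers). -/
noncomputable def besselJ (ν z : ℝ) : ℝ :=
  ∑' m : ℕ, ((-1 : ℝ) ^ m / (m.factorial * Real.Gamma ((m : ℝ) + ν + 1)))
      * (z / 2) ^ (2 * (m : ℝ) + ν)

/-- Intensity matrix of the front process on the ladder with vertical intensity `l`. -/
noncomputable def ladderQ (l : ℝ) (i j : ℕ) : ℝ :=
  if i = 0 then (if j = 0 then -2 else if j = 1 then 2 else 0)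
  else if j + 2 ≤ i then l
  else if j + 1 = i then 1 + l
  else if j = i then -(2 + (i : ℝ) * l)
  else if j = i + 1 then 1
  else 0

/-- `Ĵ_n = J_{n+(2+λ)/λ}(2/λ)` for `n ∈ ℕ`. -/
noncomputable def JhatL (l : ℝ) (n : ℕ) : ℝ := besselJ ((n : ℝ) + (2 + l) / l) (2 / l)

/-! ### Auxiliary lemmas -/

noncomputable def bt (ν z : ℝ) (m : ℕ) : ℝ :=
  ((-1 : ℝ) ^ m / (m.factorial * Real.Gamma ((m : ℝ) + ν + 1)))
      * (z / 2) ^ (2 * (m : ℝ) + ν)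

lemma besselJ_eq (ν z : ℝ) : besselJ ν z = ∑' m, bt ν z m := rfl

lemma Gamma_le_Gamma_add_nat {x : ℝ} (hx : 1 ≤ x) (m : ℕ) :
    Real.Gamma x ≤ Real.Gamma (x + m) := by
  induction m with
  | zero => simp
  | succ n ih =>
    have h1 : (0:ℝ) < x + n := by positivity
    have h2 : Real.Gamma (x + (n+1 : ℕ)) = (x + n) * Real.Gamma (x + n) := by
      push_cast
      rw [show x + ((n:ℝ)+1) = (x + n) + 1 by ring, Real.Gamma_add_one (ne_of_gt h1)]
    rw [h2]
    have h3 : (0:ℝ) < Real.Gamma (x + n) := Real.Gamma_pos_of_pos h1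
    nlinarith [Nat.cast_nonneg (α := ℝ) n]

lemma fact_mul_Gamma_le {x : ℝ} (hx : 2 ≤ x) (n : ℕ) :
    ((n+1).factorial : ℝ) * Real.Gamma x ≤ Real.Gamma (x + n) := by
  induction n with
  | zero => simp
  | succ n ih =>
    have h1 : (0:ℝ) < x + n := by positivity
    have h2 : Real.Gamma (x + (n+1 : ℕ)) = (x + n) * Real.Gamma (x + n) := by
      push_cast
      rw [show x + ((n:ℝ)+1) = (x + n) + 1 by ring, Real.Gamma_add_one (ne_of_gt h1)]
    have hg : (0:ℝ) < Real.Gamma x := Real.Gamma_pos_of_pos (by linarith)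
    have hfac : ((n+1+1).factorial : ℝ) = (n+2) * ((n+1).factorial) := by
      rw [show n+1+1 = (n+1)+1 from rfl, Nat.factorial_succ]; push_cast; ring
    rw [h2, hfac]
    have hx2 : ((n:ℝ)+2) ≤ x + n := by linarith
    calc ((n:ℝ)+2) * ((n+1).factorial) * Real.Gamma x
        = ((n:ℝ)+2) * (((n+1).factorial) * Real.Gamma x) := by ring
      _ ≤ ((n:ℝ)+2) * Real.Gamma (x + n) := by
          apply mul_le_mul_of_nonneg_left ih (by positivity)
      _ ≤ (x + n) * Real.Gamma (x + n) := by
          apply mul_le_mul_of_nonneg_right hx2 (le_of_lt (Real.Gamma_pos_of_pos h1))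

lemma abs_bt_le {ν z : ℝ} (hν : 0 ≤ ν) (hz : 0 < z) (m : ℕ) :
    |bt ν z m| ≤ (z/2)^ν / Real.Gamma (ν+1) * (((z/2)^2)^m / m.factorial) := by
  have hz2 : (0:ℝ) < z/2 := by linarith
  have hg1 : (0:ℝ) < Real.Gamma ((m:ℝ) + ν + 1) := Real.Gamma_pos_of_pos (by positivity)
  have hg2 : (0:ℝ) < Real.Gamma (ν+1) := Real.Gamma_pos_of_pos (by positivity)
  have hfac : (0:ℝ) < (m.factorial : ℝ) := by exact_mod_cast m.factorial_pos
  have hpow : (z/2) ^ (2*(m:ℝ)+ν) = ((z/2)^2)^m * (z/2)^ν := by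
    rw [Real.rpow_add hz2, ← pow_mul, ← Real.rpow_natCast (z/2) (2*m)]
    push_cast; ring_nf
  have habs : |bt ν z m| = ((z/2)^2)^m * (z/2)^ν / ((m.factorial : ℝ) * Real.Gamma ((m:ℝ)+ν+1)) := by
    unfold bt
    rw [abs_mul, abs_div, abs_pow, abs_neg, abs_one, one_pow, hpow]
    rw [abs_of_pos (by positivity : (0:ℝ) < (m.factorial : ℝ) * Real.Gamma ((m:ℝ)+ν+1)),
        abs_of_pos (by positivity : (0:ℝ) < ((z/2)^2)^m * (z/2)^ν)]
    ring
  have hG : Real.Gamma (ν+1) ≤ Real.Gamma ((m:ℝ)+ν+1) := by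
    have := Gamma_le_Gamma_add_nat (x := ν+1) (by linarith) m
    rwa [show ν+1+(m:ℝ) = (m:ℝ)+ν+1 by ring] at this
  rw [habs]
  have heq : (z/2)^ν / Real.Gamma (ν+1) * (((z/2)^2)^m / m.factorial)
      = (((z/2)^2)^m * (z/2)^ν) / ((m.factorial:ℝ) * Real.Gamma (ν+1)) := by
    field_simp
  rw [heq]
  apply div_le_div_of_nonneg_left (by positivity) (by positivity)
  exact mul_le_mul_of_nonneg_left hG (by positivity)

lemma summable_abs_bt {ν z : ℝ} (hν : 0 ≤ ν) (hz : 0 < z) :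
    Summable (fun m => |bt ν z m|) := by
  apply Summable.of_nonneg_of_le (fun m => abs_nonneg _) (abs_bt_le hν hz)
  exact (Real.summable_pow_div_factorial ((z/2)^2)).mul_left _

lemma summable_bt {ν z : ℝ} (hν : 0 ≤ ν) (hz : 0 < z) : Summable (bt ν z) :=
  (summable_abs_bt hν hz).of_abs

lemma abs_besselJ_le {ν z : ℝ} (hν : 0 ≤ ν) (hz : 0 < z) :
    |besselJ ν z| ≤ (z/2)^ν / Real.Gamma (ν+1) * ∑' m : ℕ, ((z/2)^2)^m / m.factorial := by
  rw [besselJ_eq]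
  have h1 : |∑' m, bt ν z m| ≤ ∑' m, |bt ν z m| := by
    simpa only [Real.norm_eq_abs] using
      norm_tsum_le_tsum_norm (f := bt ν z)
        (by simpa only [Real.norm_eq_abs] using summable_abs_bt hν hz)
  calc |∑' m, bt ν z m| ≤ ∑' m, |bt ν z m| := h1
    _ ≤ ∑' m : ℕ, (z/2)^ν / Real.Gamma (ν+1) * (((z/2)^2)^m / m.factorial) := by
        apply Summable.tsum_le_tsum (abs_bt_le hν hz) (summable_abs_bt hν hz)
        exact (Real.summable_pow_div_factorial ((z/2)^2)).mul_left _
    _ = (z/2)^ν / Real.Gamma (ν+1) * ∑' m : ℕ, ((z/2)^2)^m / m.factorial := tsum_mul_left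

lemma bt_zero_eq {ν z : ℝ} (hν : 1 ≤ ν) (hz : 0 < z) :
    (2*ν/z) * bt ν z 0 = bt (ν-1) z 0 := by
  have hz2 : (0:ℝ) < z/2 := by linarith
  simp only [bt]
  rw [show 2*(((0:ℕ)):ℝ)+ν = (2*(((0:ℕ)):ℝ)+(ν-1))+1 by push_cast; ring,
      Real.rpow_add_one (ne_of_gt hz2)]
  have hpos : (0:ℝ) < ((0:ℕ):ℝ) + (ν-1) + 1 := by push_cast; linarith
  rw [show ((0:ℕ):ℝ) + ν + 1 = (((0:ℕ):ℝ) + (ν-1) + 1) + 1 by push_cast; ring,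
      Real.Gamma_add_one (ne_of_gt hpos)]
  have hG : (0:ℝ) < Real.Gamma (((0:ℕ):ℝ) + (ν-1) + 1) := Real.Gamma_pos_of_pos hpos
  have hzne : z ≠ 0 := ne_of_gt hz
  field_simp
  ring

lemma bt_succ_eq {ν z : ℝ} (hν : 1 ≤ ν) (hz : 0 < z) (m : ℕ) :
    (2*ν/z) * bt ν z (m+1) = bt (ν-1) z (m+1) + bt (ν+1) z m := by
  have hz2 : (0:ℝ) < z/2 := by linarith
  simp only [bt]
  rw [show 2*(((m+1:ℕ)):ℝ)+ν = (2*((m:ℕ):ℝ)+ν+1)+1 by push_cast; ring,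
      Real.rpow_add_one (ne_of_gt hz2),
      show 2*(((m+1:ℕ)):ℝ)+(ν-1) = 2*((m:ℕ):ℝ)+ν+1 by push_cast; ring,
      show 2*((m:ℕ):ℝ)+(ν+1) = 2*((m:ℕ):ℝ)+ν+1 by ring]
  have hpos : (0:ℝ) < (m:ℝ) + ν + 1 := by positivity
  rw [show (((m+1:ℕ)):ℝ) + ν + 1 = ((m:ℝ) + ν + 1) + 1 by push_cast; ring,
      Real.Gamma_add_one (ne_of_gt hpos),
      show (((m+1:ℕ)):ℝ) + (ν-1) + 1 = (m:ℝ) + ν + 1 by push_cast; ring,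
      show ((m:ℕ):ℝ) + (ν+1) + 1 = ((m:ℝ) + ν + 1) + 1 by ring,
      Real.Gamma_add_one (ne_of_gt hpos)]
  have hG : (0:ℝ) < Real.Gamma ((m:ℝ) + ν + 1) := Real.Gamma_pos_of_pos hpos
  have hzne : z ≠ 0 := ne_of_gt hz
  have hfac : ((m+1).factorial : ℝ) = ((m:ℝ)+1) * (m.factorial : ℝ) := by
    rw [Nat.factorial_succ]; push_cast; ring
  rw [hfac, pow_succ]
  have hfacne : ((m.factorial : ℝ)) ≠ 0 := by positivity
  field_simp
  ring

lemma besselJ_recurrence {ν z : ℝ} (hν : 1 ≤ ν) (hz : 0 < z) :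
    besselJ (ν-1) z + besselJ (ν+1) z = (2*ν/z) * besselJ ν z := by
  have hz2 : (0:ℝ) < z/2 := by linarith
  set f : ℕ → ℝ := bt (ν-1) z with hf
  set g : ℕ → ℝ := bt (ν+1) z with hg
  set h : ℕ → ℝ := fun m => (2*ν/z) * bt ν z m with hh
  have hsf : Summable f := summable_bt (by linarith) hz
  have hsg : Summable g := summable_bt (by linarith) hz
  have hsb : Summable (bt ν z) := summable_bt (by linarith) hz
  have hsh : Summable h := hsb.mul_left _
  have hkey0 : h 0 = f 0 := bt_zero_eq hν hz
  have hkeys : ∀ m, h (m+1) = f (m+1) + g m := fun m => bt_succ_eq hν hz m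
  have hsf1 : Summable (fun m => f (m+1)) := (summable_nat_add_iff 1).2 hsf
  have e1 : (2*ν/z) * besselJ ν z = ∑' m, h m := by
    rw [besselJ_eq]; exact (tsum_mul_left).symm
  have e2 : ∑' m, h m = h 0 + ∑' m, h (m+1) := Summable.tsum_eq_zero_add hsh
  have e3 : ∑' m, h (m+1) = ∑' m, (f (m+1) + g m) := tsum_congr hkeys
  have e4 : ∑' m, (f (m+1) + g m) = (∑' m, f (m+1)) + ∑' m, g m := Summable.tsum_add hsf1 hsg
  have e5 : ∑' m, f m = f 0 + ∑' m, f (m+1) := Summable.tsum_eq_zero_add hsf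
  rw [besselJ_eq, besselJ_eq, e1, e2, e3, e4, hkey0, e5]
  ring

lemma Jrec (l : ℝ) (hl : 0 < l) (n : ℕ) :
    JhatL l n + JhatL l (n+2) = (((n:ℝ)+1)*l + l + 2) * JhatL l (n+1) := by
  have hl0 : (2+l)/l > 0 := by positivity
  have hz : (0:ℝ) < 2/l := by positivity
  have hν : 1 ≤ ((n:ℝ)+1) + (2+l)/l := by
    have : (0:ℝ) ≤ (n:ℝ) := Nat.cast_nonneg n
    linarith
  have h := besselJ_recurrence hν hz
  have e1 : ((n:ℝ)+1) + (2+l)/l - 1 = (n:ℝ) + (2+l)/l := by ring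
  have e2 : ((n:ℝ)+1) + (2+l)/l + 1 = ((n+2:ℕ):ℝ) + (2+l)/l := by push_cast; ring
  have e3 : (((n+1:ℕ)):ℝ) + (2+l)/l = ((n:ℝ)+1) + (2+l)/l := by push_cast; ring
  have e4 : 2*(((n:ℝ)+1) + (2+l)/l)/(2/l) = ((n:ℝ)+1)*l + l + 2 := by
    field_simp; ring
  rw [e1, e2, e4] at h
  simpa only [JhatL, e3] using h

lemma abs_JhatL_le (l : ℝ) (hl : 0 < l) :
    ∃ M : ℝ, 0 ≤ M ∧ ∀ n : ℕ, |JhatL l n| ≤ M * ((1/l)^n / n.factorial) := by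
  set ν0 : ℝ := (2+l)/l with hν0
  have hν0gt : 1 < ν0 := by
    rw [hν0, lt_div_iff₀ hl]; linarith
  set E : ℝ := ∑' m : ℕ, ((1/l)^2)^m / m.factorial with hE
  have hEnn : 0 ≤ E := tsum_nonneg (fun m => by positivity)
  have hGν0 : (0:ℝ) < Real.Gamma (ν0+1) := Real.Gamma_pos_of_pos (by linarith)
  refine ⟨(1/l)^ν0 / Real.Gamma (ν0+1) * E, by positivity, fun n => ?_⟩
  have hz : (0:ℝ) < 2/l := by positivity
  have hb := abs_besselJ_le (ν := (n:ℝ) + ν0) (z := 2/l) (by positivity) hz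
  have hzz : (2/l)/2 = 1/l := by field_simp
  rw [hzz] at hb
  have h1l : (0:ℝ) < 1/l := by positivity
  have hpow : (1/l) ^ ((n:ℝ) + ν0) = (1/l)^n * (1/l)^ν0 := by
    rw [Real.rpow_add h1l, Real.rpow_natCast]
  have hGam : ((n+1).factorial : ℝ) * Real.Gamma (ν0+1) ≤ Real.Gamma ((n:ℝ) + ν0 + 1) := by
    have := fact_mul_Gamma_le (x := ν0+1) (by linarith) n
    rwa [show ν0+1+(n:ℝ) = (n:ℝ)+ν0+1 by ring] at this
  have hGpos : (0:ℝ) < Real.Gamma ((n:ℝ)+ν0+1) := Real.Gamma_pos_of_pos (by positivity)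
  have step1 : (1/l) ^ ((n:ℝ) + ν0) / Real.Gamma ((n:ℝ)+ν0+1) * E
      ≤ (1/l)^ν0 / Real.Gamma (ν0+1) * ((1/l)^n / n.factorial) * E := by
    apply mul_le_mul_of_nonneg_right _ hEnn
    rw [hpow]
    have hfle : ((n.factorial : ℝ)) * Real.Gamma (ν0+1) ≤ Real.Gamma ((n:ℝ)+ν0+1) := by
      refine le_trans ?_ hGam
      have : (n.factorial : ℝ) ≤ ((n+1).factorial : ℝ) := by
        exact_mod_cast Nat.factorial_le (Nat.le_succ n)
      exact mul_le_mul_of_nonneg_right this (le_of_lt hGν0)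
    have hrw : (1/l)^ν0 / Real.Gamma (ν0+1) * ((1/l)^n / n.factorial)
        = ((1/l)^n * (1/l)^ν0) / ((n.factorial : ℝ) * Real.Gamma (ν0+1)) := by
      field_simp
    rw [hrw]
    exact div_le_div_of_nonneg_left (by positivity) (by positivity) hfle
  calc |JhatL l n| ≤ (1/l) ^ ((n:ℝ) + ν0) / Real.Gamma ((n:ℝ)+ν0+1) * E := hb
    _ ≤ (1/l)^ν0 / Real.Gamma (ν0+1) * ((1/l)^n / n.factorial) * E := step1
    _ = (1/l)^ν0 / Real.Gamma (ν0+1) * E * ((1/l)^n / n.factorial) := by ring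

lemma summable_abs_JhatL (l : ℝ) (hl : 0 < l) : Summable (fun n => |JhatL l n|) := by
  obtain ⟨M, hM, hb⟩ := abs_JhatL_le l hl
  exact Summable.of_nonneg_of_le (fun n => abs_nonneg _) hb
    ((Real.summable_pow_div_factorial (1/l)).mul_left M)

lemma summable_JhatL (l : ℝ) (hl : 0 < l) : Summable (JhatL l) :=
  (summable_abs_JhatL l hl).of_abs

lemma Q_super (l : ℝ) (k : ℕ) : ladderQ l (k+1) (k+2) = 1 := by
  unfold ladderQ
  rw [if_neg (by omega), if_neg (by omega), if_neg (by omega), if_neg (by omega),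
      if_pos (by omega)]

lemma Q_diag (l : ℝ) (k : ℕ) : ladderQ l (k+2) (k+2) = -(2 + ((k:ℝ)+2) * l) := by
  unfold ladderQ
  rw [if_neg (by omega), if_neg (by omega), if_neg (by omega), if_pos rfl]
  push_cast; ring

lemma Q_sub (l : ℝ) (k : ℕ) : ladderQ l (k+3) (k+2) = 1 + l := by
  unfold ladderQ
  rw [if_neg (by omega), if_neg (by omega), if_pos (by omega)]

lemma Q_upper (l : ℝ) (k i : ℕ) (h : i ≤ k) : ladderQ l i (k+2) = 0 := by
  unfold ladderQ
  rcases i with _ | i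
  · rw [if_pos rfl, if_neg (by omega), if_neg (by omega)]
  · rw [if_neg (by omega), if_neg (by omega), if_neg (by omega), if_neg (by omega),
        if_neg (by omega)]

lemma Q_tail (l : ℝ) (j i : ℕ) : ladderQ l (i + (j+2)) j = l := by
  unfold ladderQ
  rw [if_neg (by omega), if_pos (by omega)]

lemma Q_bound (l : ℝ) (hl : 0 < l) (j i : ℕ) : |ladderQ l i j| ≤ 2 + (j:ℝ)*l + l := by
  have hj0 : (0:ℝ) ≤ (j:ℝ) := Nat.cast_nonneg j
  have hjl : (0:ℝ) ≤ (j:ℝ)*l := by positivity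
  unfold ladderQ
  split_ifs with h1 h2 h3 h4 h5 h6 h7
  · rw [abs_of_nonpos (by norm_num)]; linarith
  · rw [abs_of_nonneg (by norm_num)]; linarith
  · rw [abs_zero]; linarith
  · rw [abs_of_nonneg (le_of_lt hl)]; linarith
  · rw [abs_of_nonneg (by linarith)]; linarith
  · have hij : (i:ℝ) = (j:ℝ) := by exact_mod_cast h6.symm
    have hipos : (0:ℝ) ≤ (i:ℝ)*l := by positivity
    rw [abs_neg, abs_of_nonneg (by linarith), hij]; linarith
  · rw [abs_of_nonneg (by norm_num)]; linarith
  · rw [abs_zero]; linarith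

/-- With `λ > 0`, `D = (2λ²+8λ+5)Ĵ₁ − (λ+3)Ĵ₂ ≠ 0` and `c = 2/D`,
the vector `π₀ = 1 − cĴ₀`, `π_n = c(Ĵ_{n−1} − Ĵ_n)` for `n ≥ 1` satisfies:
(i) `∑_{k=0}^n π_k = 1 − cĴ_n`; (ii) `π` is summable with total mass `1`;
(iii) every column series `∑ π_i Q(i,j)` converges absolutely to `0`. -/
theorem stmt_8 (l : ℝ) (hl : 0 < l)
    (hD : (2 * l ^ 2 + 8 * l + 5) * JhatL l 1 - (l + 3) * JhatL l 2 ≠ 0)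
    (c : ℝ) (hc : c = 2 / ((2 * l ^ 2 + 8 * l + 5) * JhatL l 1 - (l + 3) * JhatL l 2))
    (π : ℕ → ℝ) (hπ0 : π 0 = 1 - c * JhatL l 0)
    (hπ : ∀ n : ℕ, 1 ≤ n → π n = c * (JhatL l (n - 1) - JhatL l n)) :
    (∀ n : ℕ, ∑ k ∈ Finset.range (n + 1), π k = 1 - c * JhatL l n) ∧
    (Summable π ∧ ∑' k, π k = 1) ∧
    (∀ j : ℕ, Summable (fun i => |π i * ladderQ l i j|) ∧
      ∑' i, π i * ladderQ l i j = 0) := by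
  have hJsum : Summable (JhatL l) := summable_JhatL l hl
  have hrec : ∀ n : ℕ, JhatL l n + JhatL l (n+2) = (((n:ℝ)+1)*l + l + 2) * JhatL l (n+1) :=
    Jrec l hl
  have hcD : c * ((2 * l ^ 2 + 8 * l + 5) * JhatL l 1 - (l + 3) * JhatL l 2) = 2 := by
    rw [hc]; exact div_mul_cancel₀ 2 hD
  have hπshift : ∀ n : ℕ, π (n+1) = c * JhatL l n - c * JhatL l (n+1) := by
    intro n
    rw [hπ (n+1) (by omega)]
    simp only [Nat.add_sub_cancel]
    ring
  -- Part (i)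
  have part1 : ∀ n : ℕ, ∑ k ∈ Finset.range (n + 1), π k = 1 - c * JhatL l n := by
    intro n
    induction n with
    | zero => simpa using hπ0
    | succ n ih =>
      rw [Finset.sum_range_succ, ih, hπshift n]
      ring
  -- Summability of π
  have hπsum : Summable π := by
    apply (summable_nat_add_iff 1).1
    exact ((hJsum.mul_left c).sub
      ((summable_nat_add_iff 1).2 (hJsum.mul_left c))).congr
      (fun n => (hπshift n).symm)
  -- tsum π = 1
  have htsum : ∑' k, π k = 1 := by
    have h1 : Filter.Tendsto (fun n => ∑ i ∈ Finset.range n, π i)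
        Filter.atTop (nhds (∑' k, π k)) := hπsum.hasSum.tendsto_sum_nat
    have h2 : Filter.Tendsto (fun n => ∑ i ∈ Finset.range (n+1), π i)
        Filter.atTop (nhds (∑' k, π k)) := h1.comp (Filter.tendsto_add_atTop_nat 1)
    have h3 : Filter.Tendsto (fun n => 1 - c * JhatL l n) Filter.atTop (nhds 1) := by
      have := (tendsto_const_nhds (x := (1:ℝ)) (f := Filter.atTop (α := ℕ))).sub
        ((hJsum.tendsto_atTop_zero).const_mul c)
      simpa using this
    rw [funext part1] at h2
    exact tendsto_nhds_unique h2 h3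
  -- tail sums
  have htail : ∀ k : ℕ, ∑' i : ℕ, π (i + (k+1)) = c * JhatL l k := by
    intro k
    have h := Summable.sum_add_tsum_nat_add (f := π) (k+1) hπsum
    rw [htsum, part1 k] at h
    linarith
  refine ⟨part1, ⟨hπsum, htsum⟩, fun j => ?_⟩
  -- absolute summability of column j
  have habs : Summable (fun i => |π i * ladderQ l i j|) := by
    have hle : ∀ i, |π i * ladderQ l i j| ≤ |π i| * (2 + (j:ℝ)*l + l) := by
      intro i
      rw [abs_mul]
      exact mul_le_mul_of_nonneg_left (Q_bound l hl j i) (abs_nonneg _)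
    exact Summable.of_nonneg_of_le (fun i => abs_nonneg _) hle (hπsum.abs.mul_right _)
  refine ⟨habs, ?_⟩
  have hfsum : Summable (fun i => π i * ladderQ l i j) := habs.of_abs
  have hsplit := Summable.sum_add_tsum_nat_add (f := fun i => π i * ladderQ l i j) (j+2) hfsum
  have htailval : ∑' i : ℕ, π (i + (j+2)) * ladderQ l (i + (j+2)) j
      = c * JhatL l (j+1) * l := by
    calc ∑' i : ℕ, π (i + (j+2)) * ladderQ l (i + (j+2)) j
        = ∑' i : ℕ, π (i + (j+2)) * l := tsum_congr (fun i => by rw [Q_tail l j i])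
      _ = (∑' i : ℕ, π (i + (j+2))) * l := tsum_mul_right
      _ = c * JhatL l (j+1) * l := by rw [htail (j+1)]
  rw [← hsplit, htailval]
  -- finite part, by cases on j
  rcases j with _ | _ | k
  · -- j = 0
    have hs : ∑ i ∈ Finset.range 2, π i * ladderQ l i 0
        = π 0 * (-2) + π 1 * (1 + l) := by
      rw [Finset.sum_range_succ, Finset.sum_range_succ, Finset.sum_range_zero]
      norm_num [ladderQ]
    rw [hs, hπ0, hπshift 0]
    have h0 := hrec 0
    push_cast at h0 ⊢
    linear_combination hcD + c * (3 + l) * h0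
  · -- j = 1
    have hs : ∑ i ∈ Finset.range 3, π i * ladderQ l i 1
        = π 0 * 2 + π 1 * (-(2 + l)) + π 2 * (1 + l) := by
      rw [Finset.sum_range_succ, Finset.sum_range_succ, Finset.sum_range_succ,
          Finset.sum_range_zero]
      norm_num [ladderQ]
    rw [hs, hπ0, hπshift 0, hπshift 1]
    have h0 := hrec 0
    push_cast at h0 ⊢
    linear_combination (-1 : ℝ) * hcD - c * (4 + l) * h0
  · -- j = k + 2
    have hzero : ∑ i ∈ Finset.range (k+1), π i * ladderQ l i (k+2) = 0 :=
      Finset.sum_eq_zero (fun i hi => by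
        rw [Q_upper l k i (by simpa [Nat.lt_succ_iff] using Finset.mem_range.1 hi), mul_zero])
    have hs : ∑ i ∈ Finset.range (k+2+2), π i * ladderQ l i (k+2)
        = π (k+1) * 1 + π (k+2) * (-(2 + ((k:ℝ)+2) * l)) + π (k+3) * (1 + l) := by
      rw [show k+2+2 = (k+3)+1 from rfl, Finset.sum_range_succ,
          show k+3 = (k+2)+1 from rfl, Finset.sum_range_succ,
          show k+2 = (k+1)+1 from rfl, Finset.sum_range_succ,
          hzero, Q_super l k, Q_diag l k, Q_sub l k]
      ring
    rw [hs, hπshift k, hπshift (k+1), hπshift (k+2)]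
    have h1 := hrec k
    have h2 := hrec (k+1)
    push_cast at h1 h2 ⊢
    linear_combination c * h1 - c * h2
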